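/- arXiv:1807.05088 — 2 statements merged into one kernel-verified Lean document; each statement's English description precedes it below -/
import Mathlib

section
/- Let X be a real normed space, let 𝒰 ⊆ X be a nonempty compact set, and for each n ∈ ℕ let 𝒰_n be a nonempty closed subset of 𝒰 with the approximation property: for every u ∈ 𝒰 there exists a sequence (u_n) with u_n ∈ 𝒰_n and ‖u_n − u‖ → 0. Let J : 𝒰 → ℝ and J_n : 𝒰 → ℝ (n ∈ ℕ) be continuous functions such that for every sequence (v_n) in 𝒰 with v_n → v ∈ 𝒰 one has J_n(v_n) → J(v). Then: (a) for each n, J_n attains its minimum over 𝒰_n at some u_n* ∈ 𝒰_n; and (b) there exist a subsequence (u_{n_k}*) and u* ∈ 𝒰 such that ‖u_{n_k}* − u*‖ → 0 and J(u*) ≤ J(u) for all u ∈ 𝒰, i.e. u* minimizes J over 𝒰. -/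
open Filter

/-- Existence of minimizers of the approximating problems over the sets `Un n`, and
subsequential convergence of these minimizers to a minimizer of `J` over the compact set `U`. -/
theorem approx_minimizers_subsequence_converge
    {X : Type*} [NormedAddCommGroup X] [NormedSpace ℝ X]
    (U : Set X) (hUcpt : IsCompact U) (hUne : U.Nonempty)
    (Un : ℕ → Set X) (hUn_ne : ∀ n, (Un n).Nonempty) (hUn_cl : ∀ n, IsClosed (Un n))
    (hUn_sub : ∀ n, Un n ⊆ U)
    (happrox : ∀ u ∈ U, ∃ useq : ℕ → X, (∀ n, useq n ∈ Un n) ∧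
      Tendsto (fun n => ‖useq n - u‖) atTop (nhds 0))
    (J : X → ℝ) (Jn : ℕ → X → ℝ)
    (hJcont : ContinuousOn J U) (hJncont : ∀ n, ContinuousOn (Jn n) U)
    (hcons : ∀ (v : ℕ → X) (vl : X), (∀ n, v n ∈ U) → vl ∈ U →
      Tendsto v atTop (nhds vl) → Tendsto (fun n => Jn n (v n)) atTop (nhds (J vl))) :
    (∀ n, ∃ u ∈ Un n, ∀ v ∈ Un n, Jn n u ≤ Jn n v) ∧
    ∃ ustar : ℕ → X,
      (∀ n, ustar n ∈ Un n ∧ ∀ v ∈ Un n, Jn n (ustar n) ≤ Jn n v) ∧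
      ∃ φ : ℕ → ℕ, StrictMono φ ∧ ∃ ul ∈ U,
        Tendsto (fun k => ‖ustar (φ k) - ul‖) atTop (nhds 0) ∧
        ∀ u ∈ U, J ul ≤ J u := by
  -- Part (a): minimizers exist on each `Un n`.
  have hUncpt : ∀ n, IsCompact (Un n) := fun n =>
    hUcpt.of_isClosed_subset (hUn_cl n) (hUn_sub n)
  have hmin : ∀ n, ∃ u ∈ Un n, ∀ v ∈ Un n, Jn n u ≤ Jn n v := by
    intro n
    obtain ⟨u, hu, hmin⟩ := (hUncpt n).exists_isMinOn (hUn_ne n)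
      ((hJncont n).mono (hUn_sub n))
    exact ⟨u, hu, fun v hv => hmin hv⟩
  refine ⟨hmin, ?_⟩
  choose ustar hustar hustar_min using hmin
  refine ⟨ustar, fun n => ⟨hustar n, hustar_min n⟩, ?_⟩
  -- Part (b): extract a convergent subsequence.
  have hmemU : ∀ n, ustar n ∈ U := fun n => hUn_sub n (hustar n)
  obtain ⟨ul, hulU, φ, hφ, hconv⟩ := hUcpt.isSeqCompact hmemU
  refine ⟨φ, hφ, ul, hulU, ?_, ?_⟩
  · exact tendsto_iff_norm_sub_tendsto_zero.mp hconv
  · -- the mixed sequence: `ustar n` on the subsequence, `ul` elsewhere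
    classical
    set v : ℕ → X := fun n => if ∃ k, φ k = n then ustar n else ul with hv
    have hvU : ∀ n, v n ∈ U := by
      intro n; by_cases h : ∃ k, φ k = n
      · simp [hv, h, hmemU n]
      · simp [hv, h, hulU]
    have hvφ : ∀ k, v (φ k) = ustar (φ k) := fun k => by simp only [hv]; rw [if_pos ⟨k, rfl⟩]
    have hvtend : Tendsto v atTop (nhds ul) := by
      rw [Metric.tendsto_atTop] at hconv ⊢
      intro ε hε
      obtain ⟨K, hK⟩ := hconv ε hε
      refine ⟨φ K, fun n hn => ?_⟩
      by_cases h : ∃ k, φ k = n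
      · obtain ⟨k, rfl⟩ := h
        have : K ≤ k := by
          by_contra hlt
          exact absurd hn (not_le_of_gt (hφ (lt_of_not_ge hlt)))
        simpa [hv, show ∃ k', φ k' = φ k from ⟨k, rfl⟩] using hK k this
      · simpa [hv, h] using hε
    have hJv : Tendsto (fun k => Jn (φ k) (ustar (φ k))) atTop (nhds (J ul)) := by
      have := (hcons v ul hvU hulU hvtend).comp hφ.tendsto_atTop
      have heq : ((fun n => Jn n (v n)) ∘ φ) = fun k => Jn (φ k) (ustar (φ k)) := by
        funext k; simp [Function.comp, hvφ k]
      rwa [heq] at this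
    intro u huU
    obtain ⟨useq, huseq, huseq_tend⟩ := happrox u huU
    have huseqU : ∀ n, useq n ∈ U := fun n => hUn_sub n (huseq n)
    have huseq_tend' : Tendsto useq atTop (nhds u) :=
      tendsto_iff_norm_sub_tendsto_zero.mpr huseq_tend
    have hJw : Tendsto (fun k => Jn (φ k) (useq (φ k))) atTop (nhds (J u)) :=
      (hcons useq u huseqU huU huseq_tend').comp hφ.tendsto_atTop
    exact le_of_tendsto_of_tendsto hJv hJw
      (Eventually.of_forall fun k => hustar_min (φ k) _ (huseq (φ k)))
end

section
/- Let H be a real Hilbert space, let U ⊆ H be a nonempty closed convex set, and for each n ∈ ℕ let U_n ⊆ U be a nonempty closed convex set contained in a finite-dimensional subspace of H, with the approximation property: for every u ∈ U there exists a sequence (u_n) with u_n ∈ U_n and ‖u_n − u‖ → 0. Let G_n : U → [0, ∞) and G : U → [0, ∞), and define J_n(u) := G_n(u) + ‖u‖² and J(u) := G(u) + ‖u‖². Assume: (i) each J_n is continuous and strictly convex on U and J is strictly convex on U; (ii) whenever (v_n) ⊆ U with ‖v_n − v‖ → 0 for some v ∈ U, one has J_n(v_n) → J(v); (iii) whenever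 (v_n) ⊆ U converges weakly to some v ∈ U, one has G_n(v_n) → G(v). Then: (a) for each n, J_n attains its minimum over U_n at a unique point u_n*; (b) J attains its minimum over U at a unique point u*; and (c) the entire sequence (u_n*) converges strongly to u*, i.e. ‖u_n* − u*‖ → 0. -/
open Filter Topology
open Filter Topology
lemma weak_compact_extraction {H : Type*} [NormedAddCommGroup H] [InnerProductSpace ℝ H]
    [CompleteSpace H] (x : ℕ → H) (M : ℝ) (hM : ∀ k, ‖x k‖ ≤ M) :
    ∃ (v : H) (φ : ℕ → ℕ), StrictMono φ ∧
      ∀ w : H, Tendsto (fun k => (inner ℝ (x (φ k)) w : ℝ)) atTop (nhds (inner ℝ v w)) := by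
  have hM0 : 0 ≤ M := le_trans (norm_nonneg (x 0)) (hM 0)
  -- the closed span of the sequence
  set E : Submodule ℝ H := (Submodule.span ℝ (Set.range x)).topologicalClosure with hE
  have hEclosed : IsClosed (E : Set H) := Submodule.isClosed_topologicalClosure _
  have hxE : ∀ k, x k ∈ E :=
    fun k => Submodule.le_topologicalClosure _ (Submodule.subset_span (Set.mem_range_self k))
  haveI : CompleteSpace E := hEclosed.completeSpace_coe
  -- countable dense subset of E
  have hsep : TopologicalSpace.IsSeparable (E : Set H) := by
    rw [hE, Submodule.topologicalClosure_coe]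
    exact TopologicalSpace.isSeparable_closure.2 ((Set.countable_range x).isSeparable.span)
  obtain ⟨D, hDc, hDsub⟩ := hsep
  obtain ⟨w, hwD⟩ : ∃ w : ℕ → H, insert (0:H) D = Set.range w :=
    Set.Countable.exists_eq_range (hDc.insert 0) (Set.insert_nonempty _ _)
  have hdense : (E : Set H) ⊆ closure (Set.range w) := by
    rw [← hwD]
    exact hDsub.trans (closure_mono (Set.subset_insert _ _))
  -- extract subsequence converging on all w j via compactness in ℝ^ℕ
  set F : ℕ → (ℕ → ℝ) := fun k j => inner ℝ (x k) (w j) with hF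
  have hFmem : ∀ k, F k ∈ Set.univ.pi fun j => Set.Icc (-(M*‖w j‖)) (M*‖w j‖) := by
    intro k
    rw [Set.mem_univ_pi]
    intro j
    rw [Set.mem_Icc, ← abs_le]
    calc |(inner ℝ (x k) (w j) : ℝ)| ≤ ‖x k‖ * ‖w j‖ := abs_real_inner_le_norm _ _
      _ ≤ M * ‖w j‖ := by gcongr; exact hM k
  obtain ⟨a, -, φ, hφ, hconv⟩ :=
    (isCompact_univ_pi fun j => isCompact_Icc).tendsto_subseq hFmem
  have hcoord : ∀ j, Tendsto (fun k => (inner ℝ (x (φ k)) (w j) : ℝ)) atTop (nhds (a j)) := by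
    intro j
    exact (tendsto_pi_nhds.1 hconv) j
  -- convergence against every vector
  have hex : ∀ t : H, ∃ L : ℝ, Tendsto (fun k => (inner ℝ (x (φ k)) t : ℝ)) atTop (nhds L) := by
    intro t
    set y : H := (E.orthogonalProjectionOnto t : H) with hy
    have hyE : y ∈ E := (E.orthogonalProjectionOnto t).2
    have hsame : ∀ k, (inner ℝ (x k) t : ℝ) = inner ℝ (x k) y := by
      intro k
      have horth : t - y ∈ Eᗮ := Submodule.sub_starProjection_mem_orthogonal (K := E) t
      have h0 : (inner ℝ (x k) (t - y) : ℝ) = 0 := horth (x k) (hxE k)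
      have := inner_sub_right (𝕜 := ℝ) (x k) t y
      rw [h0] at this
      linarith
    have hcauchy : CauchySeq (fun k => (inner ℝ (x (φ k)) t : ℝ)) := by
      rw [Metric.cauchySeq_iff]
      intro ε hε
      have hε4 : 0 < ε / (4 * (M + 1)) := by positivity
      obtain ⟨p, ⟨j, rfl⟩, hpj⟩ := Metric.mem_closure_iff.1 (hdense hyE) _ hε4
      obtain ⟨N, hN⟩ := Metric.cauchySeq_iff.1 (hcoord j).cauchySeq (ε/2) (by positivity)
      refine ⟨N, fun m hm n hn => ?_⟩
      have key : ∀ k, |(inner ℝ (x (φ k)) t : ℝ) - inner ℝ (x (φ k)) (w j)| ≤ ε / 4 := by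
        intro k
        rw [hsame]
        have : (inner ℝ (x (φ k)) y : ℝ) - inner ℝ (x (φ k)) (w j) = inner ℝ (x (φ k)) (y - w j) := by
          rw [inner_sub_right]
        rw [this]
        calc |(inner ℝ (x (φ k)) (y - w j) : ℝ)| ≤ ‖x (φ k)‖ * ‖y - w j‖ :=
              abs_real_inner_le_norm _ _
          _ ≤ M * (ε / (4 * (M + 1))) := by
              apply mul_le_mul (hM _) _ (norm_nonneg _) hM0
              rw [← dist_eq_norm]
              exact le_of_lt hpj
          _ ≤ ε / 4 := by
              have h1 : M * (ε / (4 * (M + 1))) ≤ (M+1) * (ε / (4 * (M + 1))) := by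
                gcongr
                linarith
              have h2 : (M+1) * (ε / (4 * (M + 1))) = ε/4 := by
                field_simp
              linarith
      have h1 := key m
      have h2 := key n
      have h3 := hN m hm n hn
      rw [Real.dist_eq] at h3 ⊢
      have : (inner ℝ (x (φ m)) t : ℝ) - inner ℝ (x (φ n)) t =
          ((inner ℝ (x (φ m)) t : ℝ) - inner ℝ (x (φ m)) (w j))
          + ((inner ℝ (x (φ m)) (w j) : ℝ) - inner ℝ (x (φ n)) (w j))
          - ((inner ℝ (x (φ n)) t : ℝ) - inner ℝ (x (φ n)) (w j)) := by ring
      rw [this]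
      set A := (inner ℝ (x (φ m)) t : ℝ) - inner ℝ (x (φ m)) (w j) with hA
      set B := (inner ℝ (x (φ m)) (w j) : ℝ) - inner ℝ (x (φ n)) (w j) with hB
      set C := (inner ℝ (x (φ n)) t : ℝ) - inner ℝ (x (φ n)) (w j) with hC
      have h4 : |A + B - C| ≤ |A| + |B| + |C| := by
        calc |A + B - C| ≤ |A + B| + |C| := abs_sub _ _
          _ ≤ |A| + |B| + |C| := by have := abs_add_le A B; linarith
      have hB2 : |B| < ε/2 := h3
      linarith
    exact cauchySeq_tendsto_of_complete hcauchy
  choose c hc using hex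
  have hbound : ∀ t, |c t| ≤ M * ‖t‖ := by
    intro t
    have : ∀ k, |(inner ℝ (x (φ k)) t : ℝ)| ≤ M * ‖t‖ := fun k =>
      le_trans (abs_real_inner_le_norm _ _) (by gcongr; exact hM _)
    exact le_of_tendsto ((hc t).abs) (Eventually.of_forall this)
  have hadd : ∀ s t, c (s + t) = c s + c t := by
    intro s t
    refine tendsto_nhds_unique (hc (s+t)) ?_
    have := (hc s).add (hc t)
    simpa [inner_add_right] using this
  have hsmul : ∀ (r : ℝ) t, c (r • t) = r * c t := by
    intro r t
    refine tendsto_nhds_unique (hc (r • t)) ?_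
    have := (hc t).const_mul r
    simpa [inner_smul_right] using this
  set f : H →L[ℝ] ℝ := LinearMap.mkContinuous
    { toFun := c, map_add' := hadd, map_smul' := hsmul } M
    (fun t => by simpa [Real.norm_eq_abs] using hbound t) with hf
  refine ⟨(InnerProductSpace.toDual ℝ H).symm f, φ, hφ, fun t => ?_⟩
  have hvt : (inner ℝ ((InnerProductSpace.toDual ℝ H).symm f) t : ℝ) = f t :=
    InnerProductSpace.toDual_symm_apply
  rw [hvt]
  exact hc t


lemma mem_of_weak_limit {H : Type*} [NormedAddCommGroup H] [InnerProductSpace ℝ H]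
    [CompleteSpace H] (U : Set H) (hcl : IsClosed U) (hcv : Convex ℝ U)
    (v : ℕ → H) (vl : H) (hv : ∀ n, v n ∈ U)
    (hw : ∀ w, Tendsto (fun n => (inner ℝ (v n) w : ℝ)) atTop (nhds (inner ℝ vl w))) : vl ∈ U := by
  by_contra hne
  obtain ⟨f, u, hfU, hfvl⟩ := geometric_hahn_banach_closed_point hcv hcl hne
  set z := (InnerProductSpace.toDual ℝ H).symm f with hz
  have hzf : ∀ t : H, (inner ℝ t z : ℝ) = f t := by
    intro t
    rw [real_inner_comm]
    exact InnerProductSpace.toDual_symm_apply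
  have hlim : Tendsto (fun n => f (v n)) atTop (nhds (f vl)) := by
    have := hw z
    simpa [hzf] using this
  have : f vl ≤ u := le_of_tendsto hlim (Eventually.of_forall fun n => (hfU _ (hv n)).le)
  linarith

lemma min_unique_of_strictConvex {H : Type*} [NormedAddCommGroup H] [InnerProductSpace ℝ H]
    {U A : Set H} (hA_cv : Convex ℝ A) (hA_sub : A ⊆ U) {f : H → ℝ}
    (hsc : StrictConvexOn ℝ U f) {a b : H}
    (ha : a ∈ A ∧ ∀ v ∈ A, f a ≤ f v) (hb : b ∈ A ∧ ∀ v ∈ A, f b ≤ f v) : a = b := by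
  by_contra hne
  have hmid : (1/2 : ℝ) • a + (1/2 : ℝ) • b ∈ A :=
    hA_cv ha.1 hb.1 (by norm_num) (by norm_num) (by norm_num)
  have hlt := hsc.2 (hA_sub ha.1) (hA_sub hb.1) hne
    (by norm_num : (0:ℝ) < 1/2) (by norm_num : (0:ℝ) < 1/2) (by norm_num)
  have h1 := ha.2 _ hmid
  have h2 := hb.2 _ hmid
  have h3 := ha.2 _ hb.1
  have h4 := hb.2 _ ha.1
  simp only [smul_eq_mul] at hlt
  nlinarith

lemma exists_unique_min_findim {H : Type*} [NormedAddCommGroup H] [InnerProductSpace ℝ H]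
    (U A : Set H) (hA_ne : A.Nonempty) (hA_cl : IsClosed A)
    (hA_cv : Convex ℝ A) (hA_sub : A ⊆ U)
    (hfd : ∃ S : Submodule ℝ H, FiniteDimensional ℝ S ∧ A ⊆ (S : Set H))
    (g : H → ℝ) (hg : ∀ u ∈ U, 0 ≤ g u) (f : H → ℝ) (hfdef : ∀ u, f u = g u + ‖u‖^2)
    (hcont : ContinuousOn f U) (hsc : StrictConvexOn ℝ U f) :
    ∃! u, u ∈ A ∧ ∀ v ∈ A, f u ≤ f v := by
  obtain ⟨u0, hu0⟩ := hA_ne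
  obtain ⟨S, hSfd, hAS⟩ := hfd
  set r := f u0 with hr
  have hr0 : 0 ≤ r := by
    rw [hr, hfdef]
    have := hg u0 (hA_sub hu0)
    positivity
  set R := Real.sqrt r with hR
  set K := A ∩ Metric.closedBall 0 R with hK
  have hu0K : u0 ∈ K := by
    constructor
    · exact hu0
    · rw [Metric.mem_closedBall, dist_zero_right]
      apply Real.le_sqrt_of_sq_le
      rw [hr, hfdef]
      have := hg u0 (hA_sub hu0)
      linarith
  have hKS : K ⊆ (S : Set H) := fun z hz => hAS hz.1
  have hKcpt : IsCompact K := by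
    haveI := hSfd
    set K' : Set S := (Subtype.val : S → H) ⁻¹' K with hK'
    have hK'cl : IsClosed K' :=
      (hA_cl.inter Metric.isClosed_closedBall).preimage continuous_subtype_val
    have hK'bd : Bornology.IsBounded K' := by
      apply Bornology.IsBounded.subset (Metric.isBounded_closedBall (x := (0:S)) (r := R))
      intro z hz
      have : (z : H) ∈ Metric.closedBall (0:H) R := hz.2
      rw [Metric.mem_closedBall, dist_zero_right] at this ⊢
      exact this
    have hK'cpt : IsCompact K' := Metric.isCompact_of_isClosed_isBounded hK'cl hK'bd
    have : K = Subtype.val '' K' := by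
      rw [hK', Set.image_preimage_eq_of_subset]
      rwa [Subtype.range_coe]
    rw [this]
    exact hK'cpt.image continuous_subtype_val
  have hKU : K ⊆ U := fun z hz => hA_sub hz.1
  obtain ⟨mz, hmzK, hmin⟩ := hKcpt.exists_isMinOn ⟨u0, hu0K⟩ (hcont.mono hKU)
  have hminA : ∀ v ∈ A, f mz ≤ f v := by
    intro v hv
    by_cases hvb : ‖v‖ ≤ R
    · exact hmin ⟨hv, by rwa [Metric.mem_closedBall, dist_zero_right]⟩
    · push_neg at hvb
      have h1 : f mz ≤ r := hmin hu0K
      have h2 : R ^ 2 = r := Real.sq_sqrt hr0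
      have h3 : r < ‖v‖ ^ 2 := by
        rw [← h2]
        have hR0 : 0 ≤ R := Real.sqrt_nonneg _
        nlinarith
      have := hg v (hA_sub hv)
      rw [hfdef v]
      linarith
  refine ⟨mz, ⟨hmzK.1, hminA⟩, fun b hb => ?_⟩
  exact min_unique_of_strictConvex hA_cv hA_sub hsc hb ⟨hmzK.1, hminA⟩

lemma padding_exists (φ : ℕ → ℕ) (hφ : StrictMono φ) :
    ∃ g : ℕ → ℕ, (∀ k, g (φ k) = k) ∧ Tendsto g atTop atTop := by
  classical
  refine ⟨fun n => Nat.findGreatest (fun k => φ k ≤ n) n, fun k => ?_, ?_⟩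
  · rw [Nat.findGreatest_eq_iff]
    refine ⟨hφ.le_apply, fun _ => le_refl _, fun n hn _ => ?_⟩
    simp only [not_le]
    exact hφ hn
  · rw [tendsto_atTop_atTop]
    intro K
    refine ⟨φ K, fun n hn => ?_⟩
    exact Nat.le_findGreatest (le_trans hφ.le_apply hn) hn

lemma key_lemma {H : Type*} [NormedAddCommGroup H] [InnerProductSpace ℝ H] [CompleteSpace H]
    (U : Set H) (hU_ne : U.Nonempty) (hU_cl : IsClosed U) (hU_cv : Convex ℝ U)
    (Un : ℕ → Set H) (hUn_sub : ∀ n, Un n ⊆ U)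
    (happrox : ∀ u ∈ U, ∃ useq : ℕ → H, (∀ n, useq n ∈ Un n) ∧
      Tendsto (fun n => ‖useq n - u‖) atTop (nhds 0))
    (G : H → ℝ) (Gn : ℕ → H → ℝ) (hGn_nonneg : ∀ n, ∀ u ∈ U, 0 ≤ Gn n u)
    (J : H → ℝ) (Jn : ℕ → H → ℝ)
    (hJ_def : ∀ u, J u = G u + ‖u‖ ^ 2) (hJn_def : ∀ n u, Jn n u = Gn n u + ‖u‖ ^ 2)
    (hcons : ∀ (v : ℕ → H) (vl : H), (∀ n, v n ∈ U) → vl ∈ U →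
      Tendsto (fun n => ‖v n - vl‖) atTop (nhds 0) →
      Tendsto (fun n => Jn n (v n)) atTop (nhds (J vl)))
    (hweak : ∀ (v : ℕ → H) (vl : H), (∀ n, v n ∈ U) → vl ∈ U →
      (∀ w : H, Tendsto (fun n => (inner ℝ (v n) w : ℝ)) atTop (nhds (inner ℝ vl w))) →
      Tendsto (fun n => Gn n (v n)) atTop (nhds (G vl)))
    (ustar : ℕ → H) (hustar : ∀ n, ustar n ∈ Un n ∧ ∀ v ∈ Un n, Jn n (ustar n) ≤ Jn n v)
    (m : ℕ → ℕ) (hm : StrictMono m) :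
    ∃ (w : H) (ψ : ℕ → ℕ), StrictMono ψ ∧ (w ∈ U ∧ ∀ v ∈ U, J w ≤ J v) ∧
      Tendsto (fun k => ‖ustar (m (ψ k)) - w‖) atTop (nhds 0) := by
  have hustarU : ∀ n, ustar n ∈ U := fun n => hUn_sub n (hustar n).1
  obtain ⟨u0, hu0⟩ := hU_ne
  obtain ⟨t, ht1, ht2⟩ := happrox u0 hu0
  have hb0 : Tendsto (fun n => Jn n (t n)) atTop (nhds (J u0)) :=
    hcons t u0 (fun n => hUn_sub n (ht1 n)) hu0 ht2
  obtain ⟨B, hB⟩ := hb0.bddAbove_range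
  have hBn : ∀ n, Jn n (t n) ≤ B := fun n => hB (Set.mem_range_self n)
  have hsq : ∀ n, ‖ustar n‖ ^ 2 ≤ B := by
    intro n
    have h1 := (hustar n).2 (t n) (ht1 n)
    have h2 := hGn_nonneg n (ustar n) (hustarU n)
    have h3 := hJn_def n (ustar n)
    have h4 := hBn n
    linarith
  have hnorm : ∀ k, ‖ustar (m k)‖ ≤ Real.sqrt B :=
    fun k => Real.le_sqrt_of_sq_le (hsq (m k))
  obtain ⟨v, φ, hφ, hwconv⟩ := weak_compact_extraction (fun k => ustar (m k)) (Real.sqrt B) hnorm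
  set mφ : ℕ → ℕ := fun k => m (φ k) with hmφdef
  have hmφ : StrictMono mφ := hm.comp hφ
  obtain ⟨g, hg1, hg2⟩ := padding_exists mφ hmφ
  set p : ℕ → H := fun n => ustar (mφ (g n)) with hp
  have hpU : ∀ n, p n ∈ U := fun n => hustarU _
  have hpw : ∀ w' : H, Tendsto (fun n => (inner ℝ (p n) w' : ℝ)) atTop (nhds (inner ℝ v w')) := by
    intro w'
    have := (hwconv w').comp hg2
    simpa [Function.comp_def] using this
  have hvU : v ∈ U := mem_of_weak_limit U hU_cl hU_cv p v hpU hpw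
  have hGlim := hweak p v hpU hvU hpw
  have hc : Tendsto (fun k => Gn (mφ k) (ustar (mφ k))) atTop (nhds (G v)) := by
    have := hGlim.comp hmφ.tendsto_atTop
    simpa [Function.comp_def, hp, hg1] using this
  obtain ⟨s, hs1, hs2⟩ := happrox v hvU
  have hbv : Tendsto (fun n => Jn n (s n)) atTop (nhds (J v)) :=
    hcons s v (fun n => hUn_sub n (hs1 n)) hvU hs2
  have hbk : Tendsto (fun k => Jn (mφ k) (s (mφ k))) atTop (nhds (J v)) := by
    have := hbv.comp hmφ.tendsto_atTop
    simpa [Function.comp_def] using this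
  have ha_le : ∀ k, Jn (mφ k) (ustar (mφ k)) ≤ Jn (mφ k) (s (mφ k)) :=
    fun k => (hustar _).2 _ (hs1 _)
  have he : Tendsto (fun k => (inner ℝ (ustar (mφ k)) v : ℝ)) atTop (nhds (‖v‖^2)) := by
    have := hwconv v
    simpa [real_inner_self_eq_norm_sq] using this
  set q : ℕ → ℝ := fun k =>
    Jn (mφ k) (s (mφ k)) - Gn (mφ k) (ustar (mφ k)) - 2 * (inner ℝ (ustar (mφ k)) v : ℝ) + ‖v‖^2
    with hq
  have hqlim : Tendsto q atTop (nhds 0) := by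
    have h := ((hbk.sub hc).sub (he.const_mul 2)).add (tendsto_const_nhds (x := ‖v‖^2))
    have heq : J v - G v - 2 * ‖v‖^2 + ‖v‖^2 = 0 := by rw [hJ_def]; ring
    rw [heq] at h
    convert h using 2
  have hbound : ∀ k, ‖ustar (mφ k) - v‖^2 ≤ q k := by
    intro k
    have h1 := norm_sub_sq_real (ustar (mφ k)) v
    have h2 := hJn_def (mφ k) (ustar (mφ k))
    have h3 := ha_le k
    rw [hq]
    simp only []
    nlinarith [sq_nonneg (‖ustar (mφ k)‖ - ‖v‖)]
  have hsql : Tendsto (fun k => ‖ustar (mφ k) - v‖^2) atTop (nhds 0) :=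
    tendsto_of_tendsto_of_tendsto_of_le_of_le tendsto_const_nhds hqlim
      (fun k => sq_nonneg _) hbound
  have htend : Tendsto (fun k => ‖ustar (mφ k) - v‖) atTop (nhds 0) := by
    have h := (Real.continuous_sqrt.tendsto 0).comp hsql
    have heq : (fun k => Real.sqrt (‖ustar (mφ k) - v‖^2)) = fun k => ‖ustar (mφ k) - v‖ :=
      funext fun k => Real.sqrt_sq (norm_nonneg _)
    rw [show Real.sqrt 0 = 0 from Real.sqrt_zero] at h
    rw [← heq]
    exact h
  -- v is a global minimizer of J on U
  have hpconv : Tendsto (fun n => ‖p n - v‖) atTop (nhds 0) := by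
    have := htend.comp hg2
    simpa [Function.comp_def] using this
  have hconsp := hcons p v hpU hvU hpconv
  have haJ : Tendsto (fun k => Jn (mφ k) (ustar (mφ k))) atTop (nhds (J v)) := by
    have := hconsp.comp hmφ.tendsto_atTop
    simpa [Function.comp_def, hp, hg1] using this
  have hmin : ∀ u ∈ U, J v ≤ J u := by
    intro u hu
    obtain ⟨su, hsu1, hsu2⟩ := happrox u hu
    have hbu : Tendsto (fun n => Jn n (su n)) atTop (nhds (J u)) :=
      hcons su u (fun n => hUn_sub n (hsu1 n)) hu hsu2
    have hbuk : Tendsto (fun k => Jn (mφ k) (su (mφ k))) atTop (nhds (J u)) := by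
      have := hbu.comp hmφ.tendsto_atTop
      simpa [Function.comp_def] using this
    exact le_of_tendsto_of_tendsto' haJ hbuk (fun k => (hustar _).2 _ (hsu1 _))
  exact ⟨v, φ, hφ, ⟨hvU, hmin⟩, htend⟩

/-- Strong convergence of the unique minimizers of the strictly convex regularized
approximating problems to the unique minimizer of the limit problem. -/
theorem strictly_convex_approx_minimizers_strong_convergence
    {H : Type*} [NormedAddCommGroup H] [InnerProductSpace ℝ H] [CompleteSpace H]
    (U : Set H) (hU_ne : U.Nonempty) (hU_cl : IsClosed U) (hU_cv : Convex ℝ U)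
    (Un : ℕ → Set H) (hUn_ne : ∀ n, (Un n).Nonempty) (hUn_cl : ∀ n, IsClosed (Un n))
    (hUn_cv : ∀ n, Convex ℝ (Un n)) (hUn_sub : ∀ n, Un n ⊆ U)
    (hUn_fd : ∀ n, ∃ S : Submodule ℝ H, FiniteDimensional ℝ S ∧ Un n ⊆ (S : Set H))
    (happrox : ∀ u ∈ U, ∃ useq : ℕ → H, (∀ n, useq n ∈ Un n) ∧
      Tendsto (fun n => ‖useq n - u‖) atTop (nhds 0))
    (G : H → ℝ) (Gn : ℕ → H → ℝ)
    (hG_nonneg : ∀ u ∈ U, 0 ≤ G u) (hGn_nonneg : ∀ n, ∀ u ∈ U, 0 ≤ Gn n u)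
    (J : H → ℝ) (Jn : ℕ → H → ℝ)
    (hJ_def : ∀ u, J u = G u + ‖u‖ ^ 2) (hJn_def : ∀ n u, Jn n u = Gn n u + ‖u‖ ^ 2)
    (hJn_cont : ∀ n, ContinuousOn (Jn n) U)
    (hJn_sc : ∀ n, StrictConvexOn ℝ U (Jn n)) (hJ_sc : StrictConvexOn ℝ U J)
    (hcons : ∀ (v : ℕ → H) (vl : H), (∀ n, v n ∈ U) → vl ∈ U →
      Tendsto (fun n => ‖v n - vl‖) atTop (nhds 0) →
      Tendsto (fun n => Jn n (v n)) atTop (nhds (J vl)))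
    (hweak : ∀ (v : ℕ → H) (vl : H), (∀ n, v n ∈ U) → vl ∈ U →
      (∀ w : H, Tendsto (fun n => (inner ℝ (v n) w : ℝ)) atTop (nhds (inner ℝ vl w))) →
      Tendsto (fun n => Gn n (v n)) atTop (nhds (G vl))) :
    (∀ n, ∃! u, u ∈ Un n ∧ ∀ v ∈ Un n, Jn n u ≤ Jn n v) ∧
    (∃! u, u ∈ U ∧ ∀ v ∈ U, J u ≤ J v) ∧
    ∀ (ustar : ℕ → H) (ul : H),
      (∀ n, ustar n ∈ Un n ∧ ∀ v ∈ Un n, Jn n (ustar n) ≤ Jn n v) →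
      (ul ∈ U ∧ ∀ v ∈ U, J ul ≤ J v) →
      Tendsto (fun n => ‖ustar n - ul‖) atTop (nhds 0) := by
  have parta : ∀ n, ∃! u, u ∈ Un n ∧ ∀ v ∈ Un n, Jn n u ≤ Jn n v := fun n =>
    exists_unique_min_findim U (Un n) (hUn_ne n) (hUn_cl n) (hUn_cv n) (hUn_sub n)
      (hUn_fd n) (Gn n) (hGn_nonneg n) (Jn n) (hJn_def n) (hJn_cont n) (hJn_sc n)
  have hu' : ∀ n, (fun n => (parta n).exists.choose) n ∈ Un n ∧
      ∀ v ∈ Un n, Jn n ((fun n => (parta n).exists.choose) n) ≤ Jn n v :=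
    fun n => (parta n).exists.choose_spec
  obtain ⟨w, ψ, hψ, hwmin, -⟩ := key_lemma U hU_ne hU_cl hU_cv Un hUn_sub happrox G Gn
    hGn_nonneg J Jn hJ_def hJn_def hcons hweak _ hu' id strictMono_id
  have partb : ∃! u, u ∈ U ∧ ∀ v ∈ U, J u ≤ J v :=
    ⟨w, hwmin, fun b hb => min_unique_of_strictConvex hU_cv (Set.Subset.refl U) hJ_sc hb hwmin⟩
  refine ⟨parta, partb, ?_⟩
  intro ustar ul hustar hul
  apply tendsto_of_subseq_tendsto
  intro ns hns
  obtain ⟨ms1, hms1, hcompmono⟩ := strictMono_subseq_of_tendsto_atTop hns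
  obtain ⟨w', ψ', hψ', hw'min, htend'⟩ := key_lemma U hU_ne hU_cl hU_cv Un hUn_sub happrox
    G Gn hGn_nonneg J Jn hJ_def hJn_def hcons hweak ustar hustar (ns ∘ ms1) hcompmono
  have hwul : w' = ul := partb.unique hw'min hul
  refine ⟨ms1 ∘ ψ', ?_⟩
  rw [← hwul]
  exact htend'
end
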